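/- arXiv:2004.00722 — 3 statements merged into one kernel-verified Lean document; each statement's English description precedes it below -/
import Mathlib

section
/- Let P be a finite subset of a metric space, c_P an optimal (1,C)-median of P with C ⊆ X, and q' ∈ C with d(q', c_P) > 4ε₁·r̄ where r̄ = (1/|P|)Σ_{p∈P} d(p, c_P) and 0 < ε₁ < 1/9. Let B₂ = B(q', ε₁ r̄). If |P ∩ B₂| ≥ (1 − ε₁² − 2ε₁(1 − ε₁²))|P|, then Σ_{p∈P} d(p, q') < Σ_{p∈P} d(p, c_P), contradicting optimality of c_P; hence no such configuration exists. -/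
open scoped Classical

set_option maxHeartbeats 1000000

/-- Case 2(b) of Theorem 6 (weak sampling): if `c_P` is an optimal `(1,C)`-median of `P`,
`q' ∈ C` with `dist q' c_P > 4 ε₁ r̄` where `r̄` is the average distance of `P` to `c_P`,
`0 < ε₁ < 1/9`, and at least a `(1 - ε₁² - 2ε₁(1 - ε₁²))` fraction of the points of `P`
lie in the ball `B(q', ε₁ r̄)`, then switching the center from `c_P` to `q'` strictly
decreases the cost, contradicting the optimality of `c_P`: no such configuration exists. -/
theorem no_far_heavy_center {X : Type*} [MetricSpace X] (C : Set X) (P : Finset X)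
    (hP : P.Nonempty) (cP q' : X) (hcP : cP ∈ C) (hq' : q' ∈ C)
    (hopt : ∀ c ∈ C, ∑ p ∈ P, dist p cP ≤ ∑ p ∈ P, dist p c)
    (ε₁ rbar : ℝ) (hε0 : 0 < ε₁) (hε9 : ε₁ < 1 / 9)
    (hrbar : rbar = (1 / (P.card : ℝ)) * ∑ p ∈ P, dist p cP)
    (hfar : 4 * ε₁ * rbar < dist q' cP)
    (hheavy : (1 - ε₁ ^ 2 - 2 * ε₁ * (1 - ε₁ ^ 2)) * (P.card : ℝ) ≤
      ((P.filter fun p => dist p q' ≤ ε₁ * rbar).card : ℝ)) :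
    False := by
  classical
  set B := P.filter fun p => dist p q' ≤ ε₁ * rbar with hBdef
  have hBsub : B ⊆ P := Finset.filter_subset _ _
  have hn : (0 : ℝ) < P.card := by exact_mod_cast Finset.card_pos.mpr hP
  have hsumnn : (0 : ℝ) ≤ ∑ p ∈ P, dist p cP :=
    Finset.sum_nonneg fun p _ => dist_nonneg
  have hrnn : 0 ≤ rbar := by rw [hrbar]; positivity
  have hD : 0 < dist q' cP := lt_of_le_of_lt (by positivity) hfar
  have hle := hopt q' hq'
  have hsplit1 : ∑ p ∈ P \ B, dist p q' + ∑ p ∈ B, dist p q' = ∑ p ∈ P, dist p q' :=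
    Finset.sum_sdiff hBsub
  have hsplit2 : ∑ p ∈ P \ B, dist p cP + ∑ p ∈ B, dist p cP = ∑ p ∈ P, dist p cP :=
    Finset.sum_sdiff hBsub
  -- bound on points inside the ball, distance to q'
  have h1 : ∑ p ∈ B, dist p q' ≤ (B.card : ℝ) * (ε₁ * rbar) := by
    calc ∑ p ∈ B, dist p q' ≤ ∑ p ∈ B, (ε₁ * rbar) := by
          refine Finset.sum_le_sum fun p hp => ?_
          exact (Finset.mem_filter.mp hp).2
      _ = (B.card : ℝ) * (ε₁ * rbar) := by
          rw [Finset.sum_const, nsmul_eq_mul]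
  -- bound on points inside the ball, distance to cP
  have h2 : (B.card : ℝ) * (dist q' cP - ε₁ * rbar) ≤ ∑ p ∈ B, dist p cP := by
    calc (B.card : ℝ) * (dist q' cP - ε₁ * rbar)
        = ∑ _p ∈ B, (dist q' cP - ε₁ * rbar) := by
          rw [Finset.sum_const, nsmul_eq_mul]
      _ ≤ ∑ p ∈ B, dist p cP := by
          refine Finset.sum_le_sum fun p hp => ?_
          have hpB := (Finset.mem_filter.mp hp).2
          have := dist_triangle q' p cP
          have hc : dist q' p = dist p q' := dist_comm _ _
          linarith
  -- bound on points outside the ball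
  have h3 : ∑ p ∈ P \ B, dist p q' ≤ ∑ p ∈ P \ B, dist p cP
      + ((P \ B).card : ℝ) * dist q' cP := by
    calc ∑ p ∈ P \ B, dist p q' ≤ ∑ p ∈ P \ B, (dist p cP + dist q' cP) := by
          refine Finset.sum_le_sum fun p _ => ?_
          have := dist_triangle p cP q'
          have hc : dist cP q' = dist q' cP := dist_comm _ _
          linarith
      _ = ∑ p ∈ P \ B, dist p cP + ((P \ B).card : ℝ) * dist q' cP := by
          rw [Finset.sum_add_distrib, Finset.sum_const, nsmul_eq_mul]
  have hcardB : (B.card : ℝ) ≤ (P.card : ℝ) := by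
    exact_mod_cast Finset.card_le_card hBsub
  have hcardsd : ((P \ B).card : ℝ) = (P.card : ℝ) - (B.card : ℝ) := by
    rw [Finset.card_sdiff_of_subset hBsub]
    have := Finset.card_le_card hBsub
    push_cast [Nat.cast_sub this]
    ring_nf
  -- combine
  have key : (B.card : ℝ) * (dist q' cP - 2 * (ε₁ * rbar)) ≤
      ((P.card : ℝ) - (B.card : ℝ)) * dist q' cP := by
    nlinarith [h1, h2, h3, hsplit1, hsplit2, hle, hcardsd]
  have hheavy' : (1 - ε₁ ^ 2 - 2 * ε₁ * (1 - ε₁ ^ 2)) * (P.card : ℝ) ≤ (B.card : ℝ) := hheavy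
  set b : ℝ := (B.card : ℝ) with hb
  set n : ℝ := (P.card : ℝ) with hnn
  set D : ℝ := dist q' cP with hDdef
  set l : ℝ := 1 - ε₁ ^ 2 - 2 * ε₁ * (1 - ε₁ ^ 2) with hl
  have hl23 : (2 : ℝ) / 3 ≤ l := by rw [hl]; nlinarith
  have hfac : 0 < 2 * D - 2 * (ε₁ * rbar) := by
    have : 0 ≤ ε₁ * rbar := mul_nonneg hε0.le hrnn
    nlinarith
  -- key gives b * (2D - 2εr) ≤ n * D
  have key2 : b * (2 * D - 2 * (ε₁ * rbar)) ≤ n * D := by nlinarith [key]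
  have hln : l * n * (2 * D - 2 * (ε₁ * rbar)) ≤ n * D :=
    le_trans (by nlinarith [hheavy', hfac]) key2
  have hdiv : l * (2 * D - 2 * (ε₁ * rbar)) ≤ D := by
    have := (mul_le_mul_iff_of_pos_right hn).mpr (le_refl (1:ℝ))
    nlinarith [hln, hn]
  have hεr : 0 ≤ ε₁ * rbar := mul_nonneg hε0.le hrnn
  have h4 : 0 < (2 * l - 1) * (D - 4 * (ε₁ * rbar)) := by
    apply mul_pos <;> nlinarith
  have h5 : 0 ≤ (6 * l - 4) * (ε₁ * rbar) := by
    apply mul_nonneg <;> nlinarith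
  nlinarith [hdiv, h4, h5]
end

section
/- For any d ≥ 1 and any D, the metric space of finite trajectories in ℝ^d under the discrete Fréchet distance does not have doubling dimension D: there exists a trajectory τ, a radius r > 0, and a set of more than 2^D trajectories inside the ball B(τ, r) that are pairwise at distance greater than r. -/
/-- A monotone correspondence between index sets `Fin m` and `Fin n`:
every index on both sides is matched, and the matching respects the order. -/
def IsMonotoneCorr {m n : ℕ} (C : Finset (Fin m × Fin n)) : Prop :=
  (∀ i : Fin m, ∃ j : Fin n, (i, j) ∈ C) ∧
  (∀ j : Fin n, ∃ i : Fin m, (i, j) ∈ C) ∧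
  (∀ a ∈ C, ∀ b ∈ C, a.1 < b.1 → a.2 ≤ b.2) ∧
  (∀ a ∈ C, ∀ b ∈ C, a.2 < b.2 → a.1 ≤ b.1)

/-- The discrete Fréchet distance between two finite point sequences. -/
noncomputable def discFrechet {E : Type*} [MetricSpace E] {m n : ℕ}
    (f : Fin m → E) (g : Fin n → E) : ℝ :=
  sInf {r : ℝ | ∃ C : Finset (Fin m × Fin n), IsMonotoneCorr C ∧
    ∀ q ∈ C, dist (f q.1) (g q.2) ≤ r}

/-- A (polygonal) trajectory in `ℝ^d`: a finite sequence of points. -/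
def Traj (d : ℕ) := Σ m : ℕ, Fin m → EuclideanSpace ℝ (Fin d)

/-- Discrete Fréchet distance between trajectories. -/
noncomputable def dFT {d : ℕ} (τ₁ τ₂ : Traj d) : ℝ := discFrechet τ₁.2 τ₂.2

/-- The sign `±1` attached to a boolean choice. -/
def epsB (b : Bool) : ℝ := if b then 1 else -1

lemma epsB_abs_le (b : Bool) : |epsB b| ≤ 1 := by cases b <;> norm_num [epsB]

lemma epsB_inj : Function.Injective epsB := by
  intro b c h
  cases b <;> cases c <;> first | rfl | (norm_num [epsB] at h)

lemma epsB_abs_sub_of_ne {b c : Bool} (h : b ≠ c) : |epsB b - epsB c| = 2 := by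
  cases b <;> cases c <;> first | (exact absurd rfl h) | (norm_num [epsB])

/-- The diagonal correspondence on `Fin m × Fin m`. -/
def diagCorr (m : ℕ) : Finset (Fin m × Fin m) := Finset.univ.image (fun i => (i, i))

lemma mem_diagCorr {m : ℕ} {q : Fin m × Fin m} : q ∈ diagCorr m ↔ q.1 = q.2 := by
  cases q with
  | mk i j =>
    simp only [diagCorr, Finset.mem_image, Finset.mem_univ, true_and, Prod.mk.injEq]
    constructor
    · rintro ⟨a, rfl, rfl⟩; rfl
    · rintro rfl; exact ⟨i, rfl, rfl⟩

lemma diagCorr_isMonotone (m : ℕ) : IsMonotoneCorr (diagCorr m) := by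
  refine ⟨fun i => ⟨i, mem_diagCorr.2 rfl⟩, fun j => ⟨j, mem_diagCorr.2 rfl⟩, ?_, ?_⟩ <;>
  · intro a ha b hb hab
    rw [mem_diagCorr] at ha hb
    omega

/-- The discrete Fréchet distance on trajectories in `ℝ^d` (`d ≥ 1`) does not have
doubling dimension `D`, for any `D`: there is a trajectory `τ`, a radius `r > 0`, and
more than `2^D` trajectories inside the ball of radius `r` around `τ` that are pairwise
at distance greater than `r`. -/
theorem frechet_not_doubling (d D : ℕ) (hd : 1 ≤ d) :
    ∃ (τ : Traj d) (r : ℝ), 0 < r ∧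
      ∃ T : Set (Traj d), T.Finite ∧ 2 ^ D < T.ncard ∧
        (∀ τ' ∈ T, dFT τ τ' ≤ r) ∧
        (∀ τ₁ ∈ T, ∀ τ₂ ∈ T, τ₁ ≠ τ₂ → r < dFT τ₁ τ₂) := by
  classical
  set m := D + 1 with hm
  set i0 : Fin d := ⟨0, hd⟩ with hi0
  set pt : ℝ → EuclideanSpace ℝ (Fin d) := fun x => EuclideanSpace.single i0 x with hpt
  have hdistpt : ∀ x y : ℝ, dist (pt x) (pt y) = |x - y| := by
    intro x y
    rw [hpt]
    simp [EuclideanSpace.dist_single_same, Real.dist_eq]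
  have hptinj : Function.Injective pt := by
    intro x y hxy
    have := congrArg (fun v : EuclideanSpace ℝ (Fin d) => v i0) hxy
    simpa [hpt, EuclideanSpace.single_apply] using this
  set F : (Fin m → Bool) → Traj d := fun s => ⟨m, fun k => pt (4 * k + epsB (s k))⟩ with hF
  have hFinj : Function.Injective F := by
    intro s t hst
    have h1 : HEq (F s).2 (F t).2 := by rw [hst]
    have h2 : (fun k : Fin m => pt (4 * k + epsB (s k))) =
        (fun k : Fin m => pt (4 * k + epsB (t k))) := eq_of_heq h1
    funext k
    have h3 := hptinj (congrFun h2 k)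
    exact epsB_inj (by linarith)
  refine ⟨⟨m, fun k => pt (4 * k)⟩, 1, one_pos,
    ↑((Finset.univ : Finset (Fin m → Bool)).image F), Finset.finite_toSet _, ?_, ?_, ?_⟩
  · rw [Set.ncard_coe_finset, Finset.card_image_of_injective _ hFinj]
    simp only [Finset.card_univ, Fintype.card_fun, Fintype.card_bool, Fintype.card_fin]
    have : 2 ^ D < 2 ^ m := by
      apply Nat.pow_lt_pow_right (by norm_num)
      omega
    omega
  · -- each F s is within distance 1 of the center
    intro τ' hτ'
    rw [Finset.mem_coe, Finset.mem_image] at hτ'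
    obtain ⟨s, -, rfl⟩ := hτ'
    apply csInf_le
    · refine ⟨0, fun r hr => ?_⟩
      obtain ⟨C, ⟨hC1, -, -, -⟩, hCd⟩ := hr
      obtain ⟨j, hj⟩ := hC1 ⟨0, Nat.succ_pos D⟩
      exact le_trans dist_nonneg (hCd _ hj)
    · refine ⟨diagCorr m, diagCorr_isMonotone m, ?_⟩
      rintro ⟨i, j⟩ hq
      rw [mem_diagCorr] at hq
      cases hq
      show dist (pt _) (pt _) ≤ 1
      rw [hdistpt]
      rw [show (4 * (i:ℝ) - (4 * (i:ℝ) + epsB (s i))) = -(epsB (s i)) by ring, abs_neg]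
      exact epsB_abs_le _
  · -- pairwise distances > 1
    intro τ₁ h₁ τ₂ h₂ hne
    rw [Finset.mem_coe, Finset.mem_image] at h₁ h₂
    obtain ⟨s, -, rfl⟩ := h₁
    obtain ⟨t, -, rfl⟩ := h₂
    have hst : s ≠ t := fun h => hne (by rw [h])
    obtain ⟨i, hi⟩ : ∃ i, s i ≠ t i := by
      by_contra h; push_neg at h; exact hst (funext h)
    have key : ∀ r ∈ {r : ℝ | ∃ C : Finset (Fin m × Fin m), IsMonotoneCorr C ∧
        ∀ q ∈ C, dist (pt (4 * q.1 + epsB (s q.1))) (pt (4 * q.2 + epsB (t q.2))) ≤ r},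
        (2 : ℝ) ≤ r := by
      intro r hr
      obtain ⟨C, ⟨hC1, -, -, -⟩, hCd⟩ := hr
      obtain ⟨j, hj⟩ := hC1 i
      have hdj := hCd _ hj
      rw [hdistpt] at hdj
      refine le_trans ?_ hdj
      rcases eq_or_ne j i with rfl | hji
      · rw [show (4 * (j:ℝ) + epsB (s j) - (4 * (j:ℝ) + epsB (t j)))
          = epsB (s j) - epsB (t j) by ring]
        exact (epsB_abs_sub_of_ne hi).ge
      · have hji' : (j : ℕ) ≠ (i : ℕ) := fun h => hji (Fin.ext h)
        have h4 : (4 : ℝ) ≤ |4 * (i : ℝ) - 4 * (j : ℝ)| := by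
          rcases lt_or_gt_of_ne hji' with h | h
          · have : (j : ℝ) + 1 ≤ (i : ℝ) := by exact_mod_cast h
            rw [abs_of_nonneg (by linarith)]; linarith
          · have : (i : ℝ) + 1 ≤ (j : ℝ) := by exact_mod_cast h
            rw [abs_sub_comm, abs_of_nonneg (by linarith)]; linarith
        have h1 := epsB_abs_le (s i)
        have h2 := epsB_abs_le (t j)
        have h3 := abs_sub_abs_le_abs_sub (4 * (i:ℝ) - 4 * (j:ℝ))
          (4 * (i:ℝ) + epsB (s i) - (4 * (j:ℝ) + epsB (t j)))
        have habs : |4 * (i:ℝ) - 4*(j:ℝ)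
            - (4 * (i:ℝ) + epsB (s i) - (4 * (j:ℝ) + epsB (t j)))| ≤ 2 := by
          rw [show (4 * (i:ℝ) - 4*(j:ℝ)
            - (4 * (i:ℝ) + epsB (s i) - (4 * (j:ℝ) + epsB (t j))))
            = epsB (t j) - epsB (s i) by ring]
          calc |epsB (t j) - epsB (s i)| ≤ |epsB (t j)| + |epsB (s i)| := abs_sub _ _
            _ ≤ 2 := by linarith
        linarith
    have hne' : ∃ r, r ∈ {r : ℝ | ∃ C : Finset (Fin m × Fin m), IsMonotoneCorr C ∧
        ∀ q ∈ C, dist (pt (4 * q.1 + epsB (s q.1))) (pt (4 * q.2 + epsB (t q.2))) ≤ r} := by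
      refine ⟨2, diagCorr m, diagCorr_isMonotone m, ?_⟩
      rintro ⟨a, b⟩ hq
      rw [mem_diagCorr] at hq
      cases hq
      rw [hdistpt]
      have h1 := epsB_abs_le (s a)
      have h2 := epsB_abs_le (t a)
      rw [show (4 * (a:ℝ) + epsB (s a) - (4 * (a:ℝ) + epsB (t a)))
        = epsB (s a) - epsB (t a) by ring]
      calc |epsB (s a) - epsB (t a)| ≤ |epsB (s a)| + |epsB (t a)| := abs_sub _ _
        _ ≤ 2 := by linarith
    have h2le : (2 : ℝ) ≤ dFT (F s) (F t) := le_csInf hne' key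
    linarith
end

section
/- Let (X,d) be a metric space, C ⊆ X, P ⊆ X finite with optimal (1,C)-median c_P, and let C' be an ((εa)/2)-cover of a set containing c_P, where a ≤ (1/|P|)Σ_{p∈P} d(p, c_P). Let x ∈ C' be a nearest point of C' to c_P and x' ∈ C a nearest point of C to x. Then Σ_{p∈P} d(p, x') ≤ (1+ε)·Σ_{p∈P} d(p, c_P). -/
/-- If `c_P` is an optimal `(1,C)`-median of `P`, `x` is a point with
`dist x c_P ≤ ε a / 2` (a point of an `(εa/2)`-cover closest to `c_P`), where `a` is a
lower bound on the average distance of `P` to `c_P`, and `x'` is a nearest point of `C`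
to `x`, then `∑_{p ∈ P} dist p x' ≤ (1+ε) ∑_{p ∈ P} dist p c_P`. -/
theorem cover_point_good_center {X : Type*} [MetricSpace X] (C : Set X) (P : Finset X)
    (hP : P.Nonempty) (cP x x' : X) (ε a : ℝ) (hε : 0 < ε)
    (hcP : cP ∈ C) (hopt : ∀ c ∈ C, ∑ p ∈ P, dist p cP ≤ ∑ p ∈ P, dist p c)
    (ha : a * (P.card : ℝ) ≤ ∑ p ∈ P, dist p cP)
    (hx : dist x cP ≤ ε * a / 2)
    (hx' : x' ∈ C) (hnear : ∀ y ∈ C, dist x x' ≤ dist x y) :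
    ∑ p ∈ P, dist p x' ≤ (1 + ε) * ∑ p ∈ P, dist p cP := by
  have hxx' : dist x x' ≤ ε * a / 2 := le_trans (hnear cP hcP) hx
  have hcx' : dist cP x' ≤ ε * a := by
    calc dist cP x' ≤ dist cP x + dist x x' := dist_triangle _ _ _
    _ ≤ ε * a / 2 + ε * a / 2 := by
        rw [dist_comm]; exact add_le_add hx hxx'
    _ = ε * a := by ring
  calc ∑ p ∈ P, dist p x' ≤ ∑ p ∈ P, (dist p cP + dist cP x') := by
        exact Finset.sum_le_sum fun p _ => dist_triangle p cP x'
    _ = ∑ p ∈ P, dist p cP + (P.card : ℝ) * dist cP x' := by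
        rw [Finset.sum_add_distrib, Finset.sum_const, nsmul_eq_mul]
    _ ≤ ∑ p ∈ P, dist p cP + (P.card : ℝ) * (ε * a) := by
        gcongr
    _ = ∑ p ∈ P, dist p cP + ε * (a * (P.card : ℝ)) := by ring
    _ ≤ ∑ p ∈ P, dist p cP + ε * ∑ p ∈ P, dist p cP := by gcongr
    _ = (1 + ε) * ∑ p ∈ P, dist p cP := by ring
end
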